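/- Let G be a finite group of order n with identity 1, let G* = G \ {1}, and let k be an integer with 1 ≤ k ≤ n−1. Let y ∈ G* and let J ⊆ G* \ {y} be a set of size t such that the sets {x, x⁻¹y}, for x ∈ J, are pairwise disjoint and each of size 2. Then the number of k-element subsets S of G* such that no x ∈ G* satisfies {x, x⁻¹y} ⊆ S is at most p(n,k,t) · C(n−1, k). -/

import Mathlib

/-- Integer binomial coefficient: `intChoose a b` is zero unless `0 ≤ b ≤ a`. -/
def intChoose (a b : ℤ) : ℤ :=
  if 0 ≤ b ∧ b ≤ a then (a.toNat.choose b.toNat : ℤ) else 0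

/-- `p(n,k,t) = (∑_{i=0}^t (-1)^i C(t,i) C(n-1-2i, k-2i)) / C(n-1,k)`. -/
def pFun (n k t : ℕ) : ℚ :=
  (∑ i ∈ Finset.range (t + 1),
      (-1) ^ i * (intChoose t i : ℚ) * (intChoose ((n : ℤ) - 1 - 2 * i) ((k : ℤ) - 2 * i) : ℚ))
    / ((n - 1).choose k : ℚ)

open Finset

/-- Number of `k`-subsets of `A` containing a fixed subset `B`. -/
lemma count_superset {α : Type*} [DecidableEq α] (A B : Finset α) (k : ℕ) (hBA : B ⊆ A) :
    ((A.powersetCard k).filter (fun S => B ⊆ S)).card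
      = if B.card ≤ k then (A.card - B.card).choose (k - B.card) else 0 := by
  split_ifs with h
  · have hb : ((A.powersetCard k).filter (fun S => B ⊆ S)).card
        = ((A \ B).powersetCard (k - B.card)).card := by
      apply Finset.card_bij' (fun S _ => S \ B) (fun T _ => T ∪ B)
      · intro S hS
        rw [mem_filter, mem_powersetCard] at hS
        rw [mem_powersetCard]
        exact ⟨sdiff_subset_sdiff hS.1.1 le_rfl,
          by rw [card_sdiff_of_subset hS.2, hS.1.2]⟩
      · intro T hT
        rw [mem_powersetCard] at hT
        have hdisj : Disjoint T B := disjoint_of_subset_left hT.1 sdiff_disjoint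
        rw [mem_filter, mem_powersetCard]
        refine ⟨⟨union_subset (hT.1.trans sdiff_subset) hBA, ?_⟩, subset_union_right⟩
        rw [card_union_of_disjoint hdisj, hT.2]
        omega
      · intro S hS
        rw [mem_filter] at hS
        exact sdiff_union_of_subset hS.2
      · intro T hT
        rw [mem_powersetCard] at hT
        exact union_sdiff_cancel_right (disjoint_of_subset_left hT.1 sdiff_disjoint)
    rw [hb, card_powersetCard, card_sdiff_of_subset hBA]
  · rw [card_eq_zero, filter_eq_empty_iff]
    intro S hS hBS
    rw [mem_powersetCard] at hS
    have := card_le_card hBS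
    omega

lemma intChoose_eq (m k i : ℕ) (hk : k ≤ m) :
    intChoose ((m : ℤ) - 2 * i) ((k : ℤ) - 2 * i)
      = if 2 * i ≤ k then ((m - 2 * i).choose (k - 2 * i) : ℤ) else 0 := by
  unfold intChoose
  have h1 : ((m : ℤ) - 2 * i) = ((m : ℕ) : ℤ) - ((2 * i : ℕ) : ℤ) := by push_cast; ring
  have h2 : ((k : ℤ) - 2 * i) = ((k : ℕ) : ℤ) - ((2 * i : ℕ) : ℤ) := by push_cast; ring
  rw [h1, h2, Int.toNat_sub, Int.toNat_sub]
  split_ifs with ha hb hb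
  · rfl
  · exfalso; omega
  · exfalso
    apply ha
    constructor <;> [omega; omega]
  · rfl

theorem stmt_0 {G : Type*} [Group G] [Fintype G] [DecidableEq G]
    (n k t : ℕ) (hcard : Fintype.card G = n) (hk1 : 1 ≤ k) (hk2 : k ≤ n - 1)
    (y : G) (hy : y ∈ Finset.univ.erase (1 : G))
    (J : Finset G) (hJ : J ⊆ (Finset.univ.erase (1 : G)).erase y) (hJcard : J.card = t)
    (hsize : ∀ x ∈ J, ({x, x⁻¹ * y} : Finset G).card = 2)
    (hdisj : ∀ x ∈ J, ∀ x' ∈ J, x ≠ x' →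
      Disjoint ({x, x⁻¹ * y} : Finset G) ({x', x'⁻¹ * y} : Finset G)) :
    (((((Finset.univ.erase (1 : G)).powersetCard k).filter
        (fun S => ∀ x ∈ Finset.univ.erase (1 : G),
          ¬ ({x, x⁻¹ * y} : Finset G) ⊆ S)).card : ℚ))
      ≤ pFun n k t * ((n - 1).choose k : ℚ) := by
  classical
  set A : Finset G := Finset.univ.erase (1 : G) with hA
  have hAcard : A.card = n - 1 := by
    rw [hA, card_erase_of_mem (mem_univ _), card_univ, hcard]
  have hJA : J ⊆ A := hJ.trans (erase_subset _ _)
  have hPA : ∀ x ∈ J, ({x, x⁻¹ * y} : Finset G) ⊆ A := by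
    intro x hx
    have hx1 : x ∈ A := hJA hx
    have hxy : x ≠ y := ne_of_mem_erase (hJ hx)
    have h2 : x⁻¹ * y ∈ A := by
      rw [hA, mem_erase]
      refine ⟨?_, mem_univ _⟩
      intro h
      exact hxy (inv_mul_eq_one.mp h)
    intro a ha
    rw [mem_insert, mem_singleton] at ha
    rcases ha with rfl | rfl
    · exact hx1
    · exact h2
  -- Step 1: the counted set is contained in the set avoiding only the `J`-pairs.
  have hstep1 : ((A.powersetCard k).filter
        (fun S => ∀ x ∈ A, ¬ ({x, x⁻¹ * y} : Finset G) ⊆ S)).card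
      ≤ ((A.powersetCard k).filter
        (fun S => ∀ x ∈ J, ¬ ({x, x⁻¹ * y} : Finset G) ⊆ S)).card := by
    apply card_le_card
    apply monotone_filter_right
    intro S _ hS x hx
    exact hS x (hJA hx)
  -- Step 2: exact count of the latter by inclusion-exclusion, in ℤ.
  have key : (((A.powersetCard k).filter
        (fun S => ∀ x ∈ J, ¬ ({x, x⁻¹ * y} : Finset G) ⊆ S)).card : ℤ)
      = ∑ i ∈ Finset.range (t + 1),
          (-1) ^ i * (t.choose i : ℤ)
            * intChoose (((n - 1 : ℕ) : ℤ) - 2 * i) ((k : ℤ) - 2 * i) := by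
    have hBcard : ∀ I ∈ J.powerset,
        (I.biUnion (fun x => ({x, x⁻¹ * y} : Finset G))).card = 2 * I.card := by
      intro I hI
      rw [mem_powerset] at hI
      rw [card_biUnion (fun x hx x' hx' hne => hdisj x (hI hx) x' (hI hx') hne)]
      rw [Finset.sum_congr rfl (fun x hx => hsize x (hI hx)), sum_const, smul_eq_mul, mul_comm]
    calc (((A.powersetCard k).filter
            (fun S => ∀ x ∈ J, ¬ ({x, x⁻¹ * y} : Finset G) ⊆ S)).card : ℤ)
        = ∑ S ∈ A.powersetCard k,
            if (J.filter (fun x => ({x, x⁻¹ * y} : Finset G) ⊆ S)) = ∅ then (1 : ℤ) else 0 := by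
          rw [card_filter]
          push_cast
          refine Finset.sum_congr rfl fun S _ => ?_
          simp [filter_eq_empty_iff]
      _ = ∑ S ∈ A.powersetCard k,
            ∑ I ∈ (J.filter (fun x => ({x, x⁻¹ * y} : Finset G) ⊆ S)).powerset,
              (-1 : ℤ) ^ I.card := by
          refine Finset.sum_congr rfl fun S _ => ?_
          rw [Finset.sum_powerset_neg_one_pow_card]
      _ = ∑ S ∈ A.powersetCard k, ∑ I ∈ J.powerset,
            if I.biUnion (fun x => ({x, x⁻¹ * y} : Finset G)) ⊆ S
              then (-1 : ℤ) ^ I.card else 0 := by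
          refine Finset.sum_congr rfl fun S _ => ?_
          rw [← Finset.sum_filter]
          congr 1
          ext I
          simp only [mem_powerset, mem_filter, Finset.biUnion_subset]
          constructor
          · intro h
            exact ⟨fun a ha => (mem_filter.1 (h ha)).1, fun x hx => (mem_filter.1 (h hx)).2⟩
          · intro ⟨h1, h2⟩ a ha
            exact mem_filter.2 ⟨h1 ha, h2 a ha⟩
      _ = ∑ I ∈ J.powerset, ∑ S ∈ A.powersetCard k,
            if I.biUnion (fun x => ({x, x⁻¹ * y} : Finset G)) ⊆ S
              then (-1 : ℤ) ^ I.card else 0 := Finset.sum_comm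
      _ = ∑ I ∈ J.powerset, (-1 : ℤ) ^ I.card
            * (((A.powersetCard k).filter
                (fun S => I.biUnion (fun x => ({x, x⁻¹ * y} : Finset G)) ⊆ S)).card : ℤ) := by
          refine Finset.sum_congr rfl fun I _ => ?_
          rw [← Finset.sum_filter, Finset.sum_const, nsmul_eq_mul, mul_comm]
      _ = ∑ I ∈ J.powerset, (-1 : ℤ) ^ I.card
            * intChoose (((n - 1 : ℕ) : ℤ) - 2 * I.card) ((k : ℤ) - 2 * I.card) := by
          refine Finset.sum_congr rfl fun I hI => ?_
          congr 1
          have hsub : I.biUnion (fun x => ({x, x⁻¹ * y} : Finset G)) ⊆ A :=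
            Finset.biUnion_subset.2 fun x hx => hPA x ((mem_powerset.1 hI) hx)
          rw [count_superset A _ k hsub, hBcard I hI, hAcard,
            intChoose_eq (n - 1) k I.card hk2]
          split_ifs <;> simp
      _ = ∑ i ∈ Finset.range (t + 1),
            (-1) ^ i * (t.choose i : ℤ)
              * intChoose (((n - 1 : ℕ) : ℤ) - 2 * i) ((k : ℤ) - 2 * i) := by
          rw [Finset.sum_powerset, hJcard]
          refine Finset.sum_congr rfl fun i _ => ?_
          rw [Finset.sum_congr rfl (fun I hI => by
            rw [(mem_powersetCard.1 hI).2]), sum_const, card_powersetCard, hJcard,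
            nsmul_eq_mul]
          ring
  -- Conclude.
  have hch : ((n - 1).choose k : ℚ) ≠ 0 :=
    Nat.cast_ne_zero.2 (Nat.choose_pos hk2).ne'
  rw [pFun, div_mul_cancel₀ _ hch]
  have hrhs : (∑ i ∈ Finset.range (t + 1),
      (-1) ^ i * (intChoose t i : ℚ) * (intChoose ((n : ℤ) - 1 - 2 * i) ((k : ℤ) - 2 * i) : ℚ))
      = ((∑ i ∈ Finset.range (t + 1),
          (-1) ^ i * (t.choose i : ℤ)
            * intChoose (((n - 1 : ℕ) : ℤ) - 2 * i) ((k : ℤ) - 2 * i) : ℤ) : ℚ) := by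
    push_cast
    refine Finset.sum_congr rfl fun i hi => ?_
    rw [mem_range] at hi
    have h1 : intChoose t i = (t.choose i : ℤ) := by
      unfold intChoose
      rw [if_pos ⟨Int.ofNat_nonneg i, by exact_mod_cast Nat.lt_succ_iff.1 hi⟩]
      simp
    have hn1 : 1 ≤ n := by omega
    have h2 : ((n : ℤ) - 1 - 2 * i) = (((n - 1 : ℕ) : ℤ) - 2 * i) := by
      push_cast [hn1]; ring
    rw [h1, h2]
    norm_cast
  rw [hrhs, ← key]
  exact_mod_cast hstep1
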